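/- Let D > 0 and h > 0, and define Φ : (0,h] → ℝ by Φ(θ) = 2θ + 2D·h²·log(h/θ) − D·(h² − θ²) (equivalently, Φ(θ) = 2θ + 4D·φ_{0,2}(θ,h)). Then Φ is convex on (0,h], it attains its minimum over (0,h] at θ₀ = (√(1 + 4D²h²) − 1)/(2D), which lies in (0,h), and the minimum value equals 2D·h²·( 1/(1 + √(1 + 4D²h²)) + log( (1 + √(1 + 4D²h²))/(2Dh) ) ). -/

import Mathlib

open Real Filter

/-- Properties of `Φ(θ) = 2θ + 2D·h²·log(h/θ) − D·(h² − θ²)` (the case `N = 2`):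
convexity on `(0,h]`, minimality at `θ₀ = (√(1 + 4D²h²) − 1)/(2D) ∈ (0,h)`, and the
explicit value of the minimum
`Φ(θ₀) = 2D·h²·(1/(1 + √(1 + 4D²h²)) + log((1 + √(1 + 4D²h²))/(2Dh)))`. -/
theorem phi_min_eq_two (D h : ℝ) (hD : 0 < D) (hh : 0 < h) :
    let Φ : ℝ → ℝ := fun θ =>
      2 * θ + 2 * D * h ^ 2 * Real.log (h / θ) - D * (h ^ 2 - θ ^ 2)
    let θ₀ : ℝ := (Real.sqrt (1 + 4 * D ^ 2 * h ^ 2) - 1) / (2 * D)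
    ConvexOn ℝ (Set.Ioc 0 h) Φ ∧
    θ₀ ∈ Set.Ioo (0 : ℝ) h ∧
    (∀ θ ∈ Set.Ioc (0 : ℝ) h, Φ θ₀ ≤ Φ θ) ∧
    Φ θ₀ = 2 * D * h ^ 2 * (1 / (1 + Real.sqrt (1 + 4 * D ^ 2 * h ^ 2)) +
      Real.log ((1 + Real.sqrt (1 + 4 * D ^ 2 * h ^ 2)) / (2 * D * h))) := by
  intro Φ θ₀
  set s : ℝ := Real.sqrt (1 + 4 * D ^ 2 * h ^ 2) with hs
  have harg : (0:ℝ) ≤ 1 + 4 * D ^ 2 * h ^ 2 := by positivity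
  have hs2 : s ^ 2 = 1 + 4 * D ^ 2 * h ^ 2 := Real.sq_sqrt harg
  have hs0 : 0 ≤ s := Real.sqrt_nonneg _
  have hs1 : 1 < s := by nlinarith [sq_nonneg (s - 1), sq_nonneg h, mul_pos hD hh]
  have hθ₀pos : 0 < θ₀ := by
    have : 0 < s - 1 := by linarith
    positivity
  have hθ₀lt : θ₀ < h := by
    rw [div_lt_iff₀ (by positivity)]
    nlinarith [sq_nonneg (s - (1 + 2 * D * h)), mul_pos hD hh]
  -- the key quadratic identity
  have hquad : D * θ₀ ^ 2 + θ₀ - D * h ^ 2 = 0 := by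
    have hD' : (2 * D) ≠ 0 := by positivity
    simp only [θ₀]
    rw [← hs]
    field_simp
    nlinarith [hs2]
  have hmin : ∀ θ ∈ Set.Ioc (0 : ℝ) h, Φ θ₀ ≤ Φ θ := by
    intro θ hθ
    have hθpos : 0 < θ := hθ.1
    have hlog : Real.log (h / θ₀) - Real.log (h / θ) ≤ θ / θ₀ - 1 := by
      have h1 : Real.log (h / θ₀) - Real.log (h / θ) = Real.log (θ / θ₀) := by
        rw [Real.log_div hh.ne' hθ₀pos.ne', Real.log_div hh.ne' hθpos.ne',
          Real.log_div hθpos.ne' hθ₀pos.ne']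
        ring
      rw [h1]
      exact Real.log_le_sub_one_of_pos (by positivity)
    have hkey : 2 * D * h ^ 2 * (Real.log (h / θ₀) - Real.log (h / θ))
        ≤ 2 * D * h ^ 2 * (θ / θ₀ - 1) := by
      have : (0:ℝ) ≤ 2 * D * h ^ 2 := by positivity
      exact mul_le_mul_of_nonneg_left hlog this
    have hrw : 2 * D * h ^ 2 * (θ / θ₀ - 1) = (2 * D * θ₀ + 2) * (θ - θ₀) := by
      have h2 : 2 * D * h ^ 2 = 2 * D * θ₀ ^ 2 + 2 * θ₀ := by linarith [hquad]
      rw [h2]; field_simp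
    simp only [Φ]
    nlinarith [hkey, hrw, sq_nonneg (θ - θ₀), hD.le]
  refine ⟨?_, ⟨hθ₀pos, hθ₀lt⟩, hmin, ?_⟩
  · -- convexity
    have hlogc : ConvexOn ℝ (Set.Ioc (0:ℝ) h)
        (fun θ : ℝ => (2 * D * h ^ 2) * (-Real.log θ)) := by
      have h0 : ConvexOn ℝ (Set.Ioc (0:ℝ) h) (fun θ : ℝ => -Real.log θ) :=
        (strictConcaveOn_log_Ioi.concaveOn.neg).subset
          (fun x hx => hx.1) (convex_Ioc _ _)
      have := h0.smul (show (0:ℝ) ≤ 2 * D * h ^ 2 by positivity)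
      simpa [smul_eq_mul] using this
    have hsq : ConvexOn ℝ (Set.Ioc (0:ℝ) h) (fun θ : ℝ => D * θ ^ 2) := by
      have h0 : ConvexOn ℝ (Set.univ : Set ℝ) (fun θ : ℝ => θ ^ 2) :=
        Even.convexOn_pow (by norm_num)
      have h1 : ConvexOn ℝ (Set.Ioc (0:ℝ) h) (fun θ : ℝ => θ ^ 2) :=
        h0.subset (Set.subset_univ _) (convex_Ioc _ _)
      have := h1.smul hD.le
      simpa [smul_eq_mul] using this
    have hlin : ConvexOn ℝ (Set.Ioc (0:ℝ) h)
        (fun θ : ℝ => 2 * θ + (2 * D * h ^ 2 * Real.log h - D * h ^ 2)) := by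
      have h0 : ConvexOn ℝ (Set.Ioc (0:ℝ) h) (fun θ : ℝ => 2 * θ) := by
        have := (convexOn_id (convex_Ioc (0:ℝ) h)).smul (show (0:ℝ) ≤ 2 by norm_num)
        simpa [smul_eq_mul] using this
      have := h0.add (convexOn_const (2 * D * h ^ 2 * Real.log h - D * h ^ 2)
        (convex_Ioc _ _))
      exact this
    have hF : ConvexOn ℝ (Set.Ioc (0:ℝ) h)
        (fun θ : ℝ => (2 * θ + (2 * D * h ^ 2 * Real.log h - D * h ^ 2)) + D * θ ^ 2
          + (2 * D * h ^ 2) * (-Real.log θ)) := (hlin.add hsq).add hlogc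
    refine hF.congr fun θ hθ => ?_
    simp only [Φ]
    rw [Real.log_div hh.ne' (ne_of_gt hθ.1)]
    ring
  · -- value
    have hdiv : h / θ₀ = (1 + s) / (2 * D * h) := by
      rw [div_eq_div_iff hθ₀pos.ne' (by positivity)]
      simp only [θ₀]
      rw [← hs]
      field_simp
      nlinarith [hs2]
    have hLHS : 2 * θ₀ - D * (h ^ 2 - θ₀ ^ 2) = θ₀ := by nlinarith [hquad]
    have hR : 2 * D * h ^ 2 * (1 / (1 + s)) = θ₀ := by
      simp only [θ₀]
      rw [← hs]
      field_simp
      nlinarith [hs2]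
    simp only [Φ]
    rw [hdiv, mul_add]
    linarith [hLHS, hR]
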